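/- For every real number x ≥ 1 and every integer a ≥ 3, one has Δ_{a,1}(x) := P_{a−1}(x) · P₂(x) − P_a(x) · P₁(x) > 0. -/

import Mathlib

/-- `σ₂(n) = ∑_{d ∣ n} d²`, the sum of the squares of the divisors of `n`. -/
def sigma2 (n : ℕ) : ℕ := ∑ d ∈ n.divisors, d ^ 2

/-- The polynomials `Pₙ`, defined by `P 0 = 1` and
`Pₙ(x) = (x/n) ∑_{k=1}^{n} σ₂(k) · P_{n−k}(x)` for `n ≥ 1`.
They satisfy `Pₙ(1) = pp(n)`, the number of plane partitions of `n`. -/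
noncomputable def P : ℕ → Polynomial ℝ
  | 0 => 1
  | n + 1 => Polynomial.C (((n : ℝ) + 1)⁻¹) * Polynomial.X *
      ∑ k ∈ Finset.range (n + 1), Polynomial.C ((sigma2 (k + 1) : ℝ)) * P (n - k)

open Finset Polynomial

/-! ### Numerical values of σ₂ -/

lemma sigma2_one : sigma2 1 = 1 := by decide
lemma sigma2_two : sigma2 2 = 5 := by decide
lemma sigma2_three : sigma2 3 = 10 := by decide
lemma sigma2_four : sigma2 4 = 21 := by decide
lemma sigma2_five : sigma2 5 = 26 := by decide
lemma sigma2_six : sigma2 6 = 50 := by decide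
lemma sigma2_seven : sigma2 7 = 50 := by decide
lemma sigma2_eight : sigma2 8 = 85 := by decide
lemma sigma2_nine : sigma2 9 = 91 := by decide
lemma sigma2_ten : sigma2 10 = 130 := by decide

/-! ### Bounds on σ₂ -/

lemma inv_sq_sum_le : ∀ m : ℕ, 1 ≤ m → ∑ d ∈ Icc 2 m, (1:ℝ)/(d:ℝ)^2 ≤ 1 - 1/m := by
  intro m hm
  induction m with
  | zero => omega
  | succ m ih =>
    rcases Nat.eq_or_lt_of_le hm with h | h
    · simp [← h]
    · have hm1 : 1 ≤ m := by omega
      have h2 : 2 ≤ m + 1 := by omega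
      rw [Finset.sum_Icc_succ_top h2]
      have h0 : (0:ℝ) < m := by exact_mod_cast hm1
      have h1 : (0:ℝ) < (m:ℝ)+1 := by linarith
      have key : (1:ℝ)/((m:ℝ)+1)^2 ≤ 1/(m:ℝ) - 1/((m:ℝ)+1) := by
        rw [div_sub_div _ _ (ne_of_gt h0) (ne_of_gt h1),
          div_le_div_iff₀ (by positivity) (by positivity)]
        nlinarith
      have := ih hm1
      push_cast
      push_cast at this
      linarith

lemma sigma2_lower (m : ℕ) (hm : 1 ≤ m) : (m:ℝ)^2 ≤ (sigma2 m : ℝ) := by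
  have h1 : m ∈ m.divisors := Nat.mem_divisors_self m (by omega)
  have := Finset.single_le_sum (f := fun d => d^2) (fun d _ => Nat.zero_le _) h1
  exact_mod_cast this

lemma sigma2_upper (m : ℕ) (hm : 1 ≤ m) : (sigma2 m : ℝ) ≤ 2 * (m:ℝ)^2 := by
  have hdiv : sigma2 m = ∑ d ∈ m.divisors, (m/d)^2 := (Nat.sum_div_divisors m (·^2)).symm
  have hcast : (sigma2 m : ℝ) = ∑ d ∈ m.divisors, ((m:ℝ)/(d:ℝ))^2 := by
    rw [hdiv]
    push_cast
    apply Finset.sum_congr rfl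
    intro d hd
    obtain ⟨hdvd, hm0⟩ := Nat.mem_divisors.mp hd
    rw [Nat.cast_div hdvd]
    exact_mod_cast Nat.pos_of_mem_divisors hd |>.ne'
  rw [hcast]
  have h1mem : 1 ∈ m.divisors := Nat.one_mem_divisors.2 (by omega)
  rw [← Finset.sum_erase_add _ _ h1mem]
  have hrest : ∑ d ∈ m.divisors.erase 1, ((m:ℝ)/(d:ℝ))^2 ≤ (m:ℝ)^2 := by
    have hsub : m.divisors.erase 1 ⊆ Icc 2 m := by
      intro d hd
      have hd' := Finset.mem_of_mem_erase hd
      have h1 := Finset.ne_of_mem_erase hd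
      have := Nat.pos_of_mem_divisors hd'
      have := Nat.le_of_dvd (by omega) (Nat.mem_divisors.mp hd').1
      simp only [Finset.mem_Icc]
      omega
    calc ∑ d ∈ m.divisors.erase 1, ((m:ℝ)/(d:ℝ))^2
        ≤ ∑ d ∈ Icc 2 m, ((m:ℝ)/(d:ℝ))^2 :=
          Finset.sum_le_sum_of_subset_of_nonneg hsub (fun i _ _ => by positivity)
      _ = (m:ℝ)^2 * ∑ d ∈ Icc 2 m, (1:ℝ)/(d:ℝ)^2 := by
          rw [Finset.mul_sum]; apply Finset.sum_congr rfl; intro d hd; rw [div_pow]; ring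
      _ ≤ (m:ℝ)^2 * (1 - 1/m) := by
          apply mul_le_mul_of_nonneg_left (inv_sq_sum_le m hm) (by positivity)
      _ ≤ (m:ℝ)^2 := by
          have h0 : (0:ℝ) < m := by exact_mod_cast hm
          have : (0:ℝ) ≤ 1/(m:ℝ) := by positivity
          nlinarith
  simp only [Nat.cast_one, div_one]
  linarith

/-- σ₂(j+1) ≤ 5 σ₂(j) for j ≥ 1. -/
lemma sigma2_succ_le_five (j : ℕ) (hj : 1 ≤ j) : (sigma2 (j+1) : ℝ) ≤ 5 * sigma2 j := by
  match j, hj with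
  | 1, _ => norm_num [sigma2_one, sigma2_two]
  | (m+2), _ =>
    have hA := sigma2_upper (m+3) (by omega)
    have hB := sigma2_lower (m+2) (by omega)
    have hm : (0:ℝ) ≤ (m:ℝ) := Nat.cast_nonneg m
    push_cast at hA hB ⊢
    nlinarith

/-- σ₂(j+1) ≤ 3 σ₂(j) for j ≥ 4. -/
lemma sigma2_succ_le_three (j : ℕ) (hj : 4 ≤ j) : (sigma2 (j+1) : ℝ) ≤ 3 * sigma2 j := by
  match j, hj with
  | 4, _ => norm_num [sigma2_four, sigma2_five]
  | (m+5), _ =>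
    have hA := sigma2_upper (m+6) (by omega)
    have hB := sigma2_lower (m+5) (by omega)
    have hm : (0:ℝ) ≤ (m:ℝ) := Nat.cast_nonneg m
    push_cast at hA hB ⊢
    nlinarith

/-- Key scalar inequality: `(5−x)(x σ₂(k+2) − σ₂(k+3)) ≤ x(5x+5) σ₂(k+1)` for `x ≥ 1`. -/
lemma key_scalar (k : ℕ) (x : ℝ) (hx : 1 ≤ x) :
    (5 - x) * (x * sigma2 (k+2) - sigma2 (k+3)) ≤ x * (5*x+5) * sigma2 (k+1) := by
  match k with
  | 0 => norm_num [sigma2_one, sigma2_two, sigma2_three]; nlinarith [sq_nonneg (2*x-3)]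
  | 1 => norm_num [sigma2_two, sigma2_three, sigma2_four]; nlinarith
  | 2 => norm_num [sigma2_three, sigma2_four, sigma2_five]; nlinarith
  | 3 => norm_num [sigma2_four, sigma2_five, sigma2_six]; nlinarith
  | 4 => norm_num [sigma2_five, sigma2_six, sigma2_seven]; nlinarith
  | 5 => norm_num [sigma2_six, sigma2_seven, sigma2_eight]; nlinarith
  | 6 => norm_num [sigma2_seven, sigma2_eight, sigma2_nine]; nlinarith
  | 7 => norm_num [sigma2_eight, sigma2_nine, sigma2_ten]; nlinarith
  | (m+8) =>
    simp only [show m+8+2 = m+10 from by omega, show m+8+3 = m+11 from by omega,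
      show m+8+1 = m+9 from by omega]
    have hA := sigma2_upper (m+10) (by omega)
    have hB := sigma2_lower (m+9) (by omega)
    have hC := sigma2_succ_le_five (m+10) (by omega)
    rw [show m+10+1 = m+11 from by omega] at hC
    have hP2 : (0:ℝ) ≤ (sigma2 (m+10) : ℝ) := Nat.cast_nonneg _
    have hP3 : (0:ℝ) ≤ (sigma2 (m+11) : ℝ) := Nat.cast_nonneg _
    have hP1 : (0:ℝ) ≤ (sigma2 (m+9) : ℝ) := Nat.cast_nonneg _
    have hm : (0:ℝ) ≤ (m:ℝ) := Nat.cast_nonneg m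
    rcases le_or_gt x 5 with h5 | h5
    · -- 1 ≤ x ≤ 5
      have key : (5 - x) * (sigma2 (m+10) : ℝ) ≤ (5*x+5) * (sigma2 (m+9) : ℝ) := by
        have h1 : (5 - x) * (sigma2 (m+10) : ℝ) ≤ (5 - x) * (2 * ((m:ℝ)+10)^2) := by
          apply mul_le_mul_of_nonneg_left _ (by linarith)
          push_cast at hA ⊢; linarith
        have h2 : ((m:ℝ)+9)^2 ≤ (sigma2 (m+9) : ℝ) := by push_cast at hB ⊢; linarith
        nlinarith
      have step1 : (5 - x) * (x * sigma2 (m+10) - sigma2 (m+11)) ≤ (5-x) * (x * sigma2 (m+10)) := by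
        nlinarith
      have step2 : (5-x) * (x * (sigma2 (m+10):ℝ)) ≤ x * (5*x+5) * sigma2 (m+9) := by
        nlinarith
      push_cast at step1 step2 ⊢
      linarith
    · -- x > 5
      have hge : (0:ℝ) ≤ x * sigma2 (m+10) - sigma2 (m+11) := by
        have : (5:ℝ) * sigma2 (m+10) ≤ x * sigma2 (m+10) := by nlinarith
        push_cast at hC this ⊢; linarith
      have : (5 - x) * (x * (sigma2 (m+10):ℝ) - sigma2 (m+11)) ≤ 0 :=
        mul_nonpos_of_nonpos_of_nonneg (by linarith) hge
      have hR : (0:ℝ) ≤ x * (5*x+5) * (sigma2 (m+9):ℝ) :=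
        mul_nonneg (by nlinarith) hP1
      push_cast at this hR ⊢
      linarith

/-! ### The recurrence for the evaluations of `P` -/

lemma P_rec (x : ℝ) (n : ℕ) :
    ((n : ℝ) + 1) * (P (n+1)).eval x
      = x * ∑ k ∈ range (n+1), (sigma2 (k+1) : ℝ) * (P (n-k)).eval x := by
  have h : ((n : ℝ) + 1) ≠ 0 := by positivity
  simp only [P, eval_mul, eval_C, eval_X, eval_finset_sum]
  field_simp

lemma sigma2_ge_one (n : ℕ) : 1 ≤ sigma2 (n+1) := by
  have h1 : 1 ∈ (n+1).divisors := Nat.one_mem_divisors.2 (Nat.succ_ne_zero n)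
  calc 1 = 1^2 := by norm_num
  _ ≤ ∑ d ∈ (n+1).divisors, d^2 :=
    Finset.single_le_sum (f := fun d => d^2) (fun d _ => Nat.zero_le _) h1

lemma P_pos (x : ℝ) (hx : 0 < x) : ∀ n, 0 < (P n).eval x := by
  intro n
  induction n using Nat.strong_induction_on with
  | _ n ih =>
    match n with
    | 0 => simp [P]
    | n+1 =>
      have h : 0 < x * ∑ k ∈ range (n+1), (sigma2 (k+1) : ℝ) * (P (n-k)).eval x := by
        apply mul_pos hx
        apply Finset.sum_pos
        · intro k hk
          apply mul_pos
          · exact_mod_cast Nat.lt_of_lt_of_le Nat.zero_lt_one (sigma2_ge_one k)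
          · exact ih (n-k) (by omega)
        · exact ⟨0, by simp⟩
      have h2 := P_rec x n
      nlinarith [Nat.cast_nonneg (α := ℝ) n]

/-- Canonical partial sums appearing in the recurrence. -/
noncomputable def T (x : ℝ) (j m : ℕ) : ℝ :=
  ∑ k ∈ range m, (sigma2 (k+j) : ℝ) * (P (m - 1 - k)).eval x

lemma T_peel (x : ℝ) (j n : ℕ) :
    T x j (n+1) = (sigma2 j : ℝ) * (P n).eval x + T x (j+1) n := by
  unfold T
  rw [Finset.sum_range_succ', add_comm]
  congr 1
  all_goals try simp
  apply Finset.sum_congr rfl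
  intro k hk
  rw [show k + 1 + j = k + (j+1) from by omega, show n - (k+1) = n - 1 - k from by omega]

lemma P_rec' (x : ℝ) (n : ℕ) :
    ((n : ℝ) + 1) * (P (n+1)).eval x = x * T x 1 (n+1) := by
  rw [P_rec]
  rfl

lemma key_sum (x : ℝ) (hx : 1 ≤ x) (m : ℕ) :
    (5 - x) * (x * T x 2 m - T x 3 m) ≤ x * (5*x+5) * T x 1 m := by
  have hx0 : (0:ℝ) < x := by linarith
  unfold T
  have e1 : (5 - x) * (x * (∑ k ∈ range m, (sigma2 (k+2) : ℝ) * (P (m-1-k)).eval x)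
        - ∑ k ∈ range m, (sigma2 (k+3) : ℝ) * (P (m-1-k)).eval x)
      = ∑ k ∈ range m, ((5-x) * (x * (sigma2 (k+2):ℝ) - (sigma2 (k+3):ℝ))) * (P (m-1-k)).eval x := by
    rw [Finset.mul_sum, ← Finset.sum_sub_distrib, Finset.mul_sum]
    apply Finset.sum_congr rfl
    intro k hk
    ring
  have e2 : x * (5*x+5) * (∑ k ∈ range m, (sigma2 (k+1) : ℝ) * (P (m-1-k)).eval x)
      = ∑ k ∈ range m, (x * (5*x+5) * (sigma2 (k+1):ℝ)) * (P (m-1-k)).eval x := by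
    rw [Finset.mul_sum]
    apply Finset.sum_congr rfl
    intro k hk
    ring
  rw [e1, e2]
  apply Finset.sum_le_sum
  intro k hk
  exact mul_le_mul_of_nonneg_right (key_scalar k x hx) (P_pos x hx0 _).le

/-- The key estimate `(5−x)(x P_{s+2} − P_{s+3}) ≤ x(5x+5) P_{s+1}` for `x ≥ 1`. -/
lemma W_lemma (x : ℝ) (hx : 1 ≤ x) (s : ℕ) :
    (5 - x) * (x * (P (s+2)).eval x - (P (s+3)).eval x)
      ≤ x * (5*x+5) * (P (s+1)).eval x := by
  have hx0 : (0:ℝ) < x := by linarith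
  have hpos : (0:ℝ) < (s:ℝ) + 3 := by positivity
  set p1 := (P (s+1)).eval x with hp1
  set p2 := (P (s+2)).eval x with hp2
  set p3 := (P (s+3)).eval x with hp3
  have h1 : ((s:ℝ)+3) * p3 = x * (p2 + (5 * p1 + T x 3 (s+1))) := by
    have := P_rec' x (s+2)
    rw [T_peel x 1 (s+2), T_peel x 2 (s+1), sigma2_one, sigma2_two] at this
    push_cast at this
    linarith [this]
  have h0 : ((s:ℝ)+2) * p2 = x * (p1 + T x 2 (s+1)) := by
    have := P_rec' x (s+1)
    rw [T_peel x 1 (s+1), sigma2_one] at this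
    push_cast at this
    linarith [this]
  have hrecs : ((s:ℝ)+1) * p1 = x * T x 1 (s+1) := P_rec' x s
  have ID : ((s:ℝ)+3) * (x * p2 - p3) = x * (x * T x 2 (s+1) - T x 3 (s+1)) + x * (x-5) * p1 := by
    linear_combination x * h0 - h1
  have E : ((s:ℝ)+3) * ((5-x) * (x * p2 - p3))
      = x * ((5-x) * (x * T x 2 (s+1) - T x 3 (s+1))) - x * (5-x)^2 * p1 := by
    linear_combination (5-x) * ID
  have E2 : ((s:ℝ)+3) * (x * (5*x+5) * p1)
      = x * (x * (5*x+5) * T x 1 (s+1)) + 2 * (x * (5*x+5) * p1) := by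
    linear_combination (5*x^2+5*x) * hrecs
  have hk2 : x * ((5-x) * (x * T x 2 (s+1) - T x 3 (s+1))) ≤ x * (x * (5*x+5) * T x 1 (s+1)) :=
    mul_le_mul_of_nonneg_left (key_sum x hx (s+1)) hx0.le
  have hA : (0:ℝ) ≤ x * (5-x)^2 * p1 :=
    mul_nonneg (mul_nonneg hx0.le (sq_nonneg _)) (P_pos x hx0 _).le
  have hB : (0:ℝ) ≤ x * (5*x+5) * p1 :=
    mul_nonneg (mul_nonneg hx0.le (by linarith)) (P_pos x hx0 _).le
  have H : ((s:ℝ)+3) * ((5-x) * (x * p2 - p3)) ≤ ((s:ℝ)+3) * (x * (5*x+5) * p1) := by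
    linarith
  exact le_of_mul_le_mul_left H hpos

/-- The main estimate: `(x+5) P_{t+3} − 2 P_{t+4} > 0` for `x ≥ 1`. -/
lemma main_pos (x : ℝ) (hx : 1 ≤ x) (t : ℕ) :
    0 < (x+5) * (P (t+3)).eval x - 2 * (P (t+4)).eval x := by
  have hx0 : (0:ℝ) < x := by linarith
  have hpos : (0:ℝ) < (t:ℝ) + 4 := by positivity
  set p0 := (P t).eval x with hq0
  set p1 := (P (t+1)).eval x with hq1
  set p2 := (P (t+2)).eval x with hq2
  set p3 := (P (t+3)).eval x with hq3
  set p4 := (P (t+4)).eval x with hq4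
  have h3 : ((t:ℝ)+4) * p4 = x * (p3 + (5 * p2 + (10 * p1 + (21 * p0 + T x 5 t)))) := by
    have := P_rec' x (t+3)
    rw [T_peel x 1 (t+3), T_peel x 2 (t+2), T_peel x 3 (t+1), T_peel x 4 t,
      sigma2_one, sigma2_two, sigma2_three, sigma2_four] at this
    push_cast at this
    linarith [this]
  have h2 : ((t:ℝ)+3) * p3 = x * (p2 + (5 * p1 + (10 * p0 + T x 4 t))) := by
    have := P_rec' x (t+2)
    rw [T_peel x 1 (t+2), T_peel x 2 (t+1), T_peel x 3 t,
      sigma2_one, sigma2_two, sigma2_three] at this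
    push_cast at this
    linarith [this]
  have ID2 : ((t:ℝ)+4) * ((x+5) * p3 - 2 * p4)
      = (5-x) * (p3 - x * p2)
        + x * ((5*x+5) * p1 + (10*x+8) * p0 + ((x+5) * T x 4 t - 2 * T x 5 t)) := by
    linear_combination (x+5) * h2 - 2 * h3
  have hW := W_lemma x hx t
  have hT : (0:ℝ) ≤ (x+5) * T x 4 t - 2 * T x 5 t := by
    unfold T
    rw [Finset.mul_sum, Finset.mul_sum, ← Finset.sum_sub_distrib]
    apply Finset.sum_nonneg
    intro k hk
    have h3' := sigma2_succ_le_three (k+4) (by omega)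
    have hp := (P_pos x hx0 (t-1-k)).le
    have hσ : (0:ℝ) ≤ (sigma2 (k+4) : ℝ) := Nat.cast_nonneg _
    rw [show k+4+1 = k+5 from rfl] at h3'
    nlinarith [mul_le_mul_of_nonneg_right h3' hp, mul_nonneg hσ hp, hx]
  have hTn : (0:ℝ) ≤ x * ((x+5) * T x 4 t - 2 * T x 5 t) := mul_nonneg hx0.le hT
  have hp0 : (0:ℝ) < x * ((10*x+8) * p0) :=
    mul_pos hx0 (mul_pos (by linarith) (P_pos x hx0 _))
  have hB : (0:ℝ) ≤ x * ((5*x+5) * p1) :=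
    mul_nonneg hx0.le (mul_nonneg (by linarith) (P_pos x hx0 _).le)
  have H : 0 < ((t:ℝ)+4) * ((x+5) * p3 - 2 * p4) := by
    rw [ID2]
    nlinarith [hW]
  nlinarith [H, hpos]

/-- Base case: `(x+5) P₂ − 2 P₃ > 0` for `x ≥ 1`. -/
lemma base_pos (x : ℝ) (hx : 1 ≤ x) :
    0 < (x+5) * (P 2).eval x - 2 * (P 3).eval x := by
  have h2 : (P 2).eval x = x * (x + 5) / 2 := by
    simp [P, Finset.sum_range_succ, sigma2_one, sigma2_two]
    ring
  have h3 : (P 3).eval x = x * (x * (x+5) / 2 + 5 * x + 10) / 3 := by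
    simp [P, Finset.sum_range_succ, sigma2_one, sigma2_two, sigma2_three]
    ring
  rw [h2, h3]
  nlinarith [sq_nonneg x, hx]

/-- For every real `x ≥ 1` and every integer `a ≥ 3`:
`Δ_{a,1}(x) = P (a-1) · P 2 − P a · P 1 > 0` at `x`. -/
theorem Delta_a_one_pos (x : ℝ) (hx : 1 ≤ x) (a : ℕ) (ha : 3 ≤ a) :
    (P (a - 1)).eval x * (P 2).eval x - (P a).eval x * (P 1).eval x > 0 := by
  have hx0 : (0:ℝ) < x := by linarith
  have h1 : (P 1).eval x = x := by
    simp [P, sigma2_one]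
  have h2 : (P 2).eval x = x * (x + 5) / 2 := by
    simp [P, Finset.sum_range_succ, sigma2_one, sigma2_two]
    ring
  have key : 0 < (x+5) * (P (a-1)).eval x - 2 * (P a).eval x := by
    match a, ha with
    | 3, _ => exact base_pos x hx
    | (t+4), _ => exact main_pos x hx t
  rw [h1, h2]
  nlinarith [mul_pos hx0 key]
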